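/- arXiv:2006.16023 — 6 statements merged into one kernel-verified Lean document; each statement's English description precedes it below -/
import Mathlib

section
/- The 4×4 real matrix 𝒜 with rows (1, 1, 1, 0), (π/(2T), −π/(2T), 0, π/(2T)), ((π/(2T))e^{π/2}, −(π/(2T))e^{−π/2}, −π/(2T), 0), ((π/(2T))² e^{π/2}, (π/(2T))² e^{−π/2}, 0, −(π/(2T))²) is invertible for every real T > 0. -/
open Real

/-- The 4×4 boundary-condition matrix 𝒜 of the paper is invertible for every `T > 0`. -/
theorem matrixA_isUnit (T : ℝ) (hT : 0 < T) :
    IsUnit (!![(1:ℝ), 1, 1, 0;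
      π/(2*T), -(π/(2*T)), 0, π/(2*T);
      (π/(2*T)) * Real.exp (π/2), -((π/(2*T)) * Real.exp (-(π/2))), -(π/(2*T)), 0;
      (π/(2*T))^2 * Real.exp (π/2), (π/(2*T))^2 * Real.exp (-(π/2)), 0, -((π/(2*T))^2)]) := by
  rw [Matrix.isUnit_iff_isUnit_det, isUnit_iff_ne_zero]
  have ha : 0 < π/(2*T) := div_pos pi_pos (by linarith)
  have hE : Real.exp (-(π/2)) < Real.exp (π/2) := by
    apply Real.exp_lt_exp.2; linarith [pi_pos]
  set a := π/(2*T)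
  set E := Real.exp (π/2)
  set F := Real.exp (-(π/2))
  have hdet : (!![(1:ℝ), 1, 1, 0;
      a, -a, 0, a;
      a * E, -(a * F), -a, 0;
      a^2 * E, a^2 * F, 0, -(a^2)]).det = -2*a^4*(E-F) := by
    have hFE : F * E = 1 := by
      rw [← Real.exp_add]; norm_num
    simp [Matrix.det_succ_row_zero, Fin.sum_univ_succ, Fin.succAbove]
    linear_combination (π^4 * T⁻¹^4 / 8) * hFE
  rw [hdet]
  have : 0 < a^4 := by positivity
  nlinarith
end

section
/- For T > 0 and ω = π/(2T), the only solution of h'''' = ω⁴ h on [0,T] satisfying h(0) = 0, h'(0) = 0, h'(T) = 0 and h''(T) = 0 is the zero function. -/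
open Real Set

private lemma iteratedDeriv_sub' {f g : ℝ → ℝ} {n : ℕ} (hf : ContDiff ℝ n f)
    (hg : ContDiff ℝ n g) (x : ℝ) :
    iteratedDeriv n (fun t => f t - g t) x = iteratedDeriv n f x - iteratedDeriv n g x := by
  have hfg : (fun t => f t - g t) = f - g := rfl
  rw [hfg, ← iteratedDerivWithin_univ, ← iteratedDerivWithin_univ, ← iteratedDerivWithin_univ]
  exact iteratedDerivWithin_sub (Set.mem_univ x) uniqueDiffOn_univ hf.contDiffWithinAt hg.contDiffWithinAt

private lemma hd_comp (f f' : ℝ → ℝ) (hf : ∀ x, HasDerivAt f (f' x) x) (c t : ℝ) :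
    HasDerivAt (fun s => f (c * s)) (c * f' (c * t)) t := by
  exact ((hf (c * t)).comp t ((hasDerivAt_id t).const_mul c)).congr_deriv (by simp [mul_comm])

/-- Energy/Gronwall uniqueness for the IVP `w'''' = K w`, zero initial data. -/
private lemma ode4_zero (T : ℝ) (hT : 0 < T) (K : ℝ) (hK : 0 ≤ K) (w : ℝ → ℝ)
    (hw : ContDiff ℝ 4 w)
    (hode : ∀ t ∈ Icc (0:ℝ) T, iteratedDeriv 4 w t = K * w t)
    (e0 : w 0 = 0) (e1 : deriv w 0 = 0) (e2 : iteratedDeriv 2 w 0 = 0)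
    (e3 : iteratedDeriv 3 w 0 = 0) :
    ∀ t ∈ Icc (0:ℝ) T, w t = 0 ∧ deriv w t = 0 ∧ iteratedDeriv 2 w t = 0 := by
  set w1 := deriv w with hw1
  set w2 := iteratedDeriv 2 w with hw2
  set w3 := iteratedDeriv 3 w with hw3
  have d0 : Differentiable ℝ w := hw.differentiable (by norm_num)
  have d1 : Differentiable ℝ w1 := by
    rw [hw1, ← iteratedDeriv_one]
    exact hw.differentiable_iteratedDeriv 1 (by norm_num)
  have d2 : Differentiable ℝ w2 := hw.differentiable_iteratedDeriv 2 (by norm_num)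
  have d3 : Differentiable ℝ w3 := hw.differentiable_iteratedDeriv 3 (by norm_num)
  have key2 : w2 = deriv w1 := by rw [hw2, hw1, iteratedDeriv_succ, iteratedDeriv_one]
  have key3 : w3 = deriv w2 := by rw [hw3, hw2, iteratedDeriv_succ]
  have key4 : iteratedDeriv 4 w = deriv w3 := by rw [hw3, iteratedDeriv_succ]
  have D1 : ∀ t, HasDerivAt w (w1 t) t := fun t => (d0 t).hasDerivAt
  have D2 : ∀ t, HasDerivAt w1 (w2 t) t := fun t => by
    rw [key2]; exact (d1 t).hasDerivAt
  have D3 : ∀ t, HasDerivAt w2 (w3 t) t := fun t => by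
    rw [key3]; exact (d2 t).hasDerivAt
  have D4 : ∀ t, HasDerivAt w3 (iteratedDeriv 4 w t) t := fun t => by
    rw [key4]; exact (d3 t).hasDerivAt
  set E : ℝ → ℝ := fun t => w t * w t + w1 t * w1 t + w2 t * w2 t + w3 t * w3 t with hE
  set E' : ℝ → ℝ := fun t =>
    2 * (w t * w1 t) + 2 * (w1 t * w2 t) + 2 * (w2 t * w3 t)
      + 2 * (w3 t * iteratedDeriv 4 w t) with hE'
  have DE : ∀ t, HasDerivAt E (E' t) t := by
    intro t
    have := ((((D1 t).mul (D1 t)).add ((D2 t).mul (D2 t))).add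
      ((D3 t).mul (D3 t))).add ((D4 t).mul (D4 t))
    refine this.congr_deriv ?_
    simp only [hE']; ring
  set C : ℝ := 2 + K with hC
  set F : ℝ → ℝ := fun t => E t * Real.exp (-C * t) with hF
  have DF : ∀ t, HasDerivAt F ((E' t - C * E t) * Real.exp (-C * t)) t := by
    intro t
    have hexp : HasDerivAt (fun s => Real.exp (-C * s)) (-C * Real.exp (-C * t)) t :=
      hd_comp Real.exp Real.exp Real.hasDerivAt_exp (-C) t
    have := (DE t).mul hexp
    refine this.congr_deriv ?_
    ring
  have hanti : AntitoneOn F (Icc 0 T) := by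
    apply antitoneOn_of_deriv_nonpos (convex_Icc 0 T)
    · exact fun t _ => ((DF t).continuousAt).continuousWithinAt
    · exact fun t _ => ((DF t).differentiableAt).differentiableWithinAt
    · intro x hx
      rw [interior_Icc] at hx
      rw [(DF x).deriv]
      have hox := hode x ⟨hx.1.le, hx.2.le⟩
      have hle : E' x - C * E x ≤ 0 := by
        simp only [hE', hE, hC, hox]
        nlinarith [sq_nonneg (w x - w1 x), sq_nonneg (w1 x - w2 x), sq_nonneg (w2 x - w3 x),
          sq_nonneg (w3 x - w x), mul_nonneg hK (sq_nonneg (w1 x)),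
          mul_nonneg hK (sq_nonneg (w2 x))]
      exact mul_nonpos_of_nonpos_of_nonneg hle (Real.exp_pos _).le
  intro t ht
  have hF0 : F 0 = 0 := by simp [hF, hE, e0, e1, e2, e3]
  have hFt : F t ≤ 0 := by
    have := hanti (left_mem_Icc.mpr hT.le) ht ht.1
    rwa [hF0] at this
  have hEt0 : 0 ≤ E t := by
    simp only [hE]
    nlinarith [mul_self_nonneg (w t), mul_self_nonneg (w1 t), mul_self_nonneg (w2 t),
      mul_self_nonneg (w3 t)]
  have hEt : E t = 0 := by
    have hFt' : 0 ≤ F t := mul_nonneg hEt0 (Real.exp_pos _).le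
    have : F t = 0 := le_antisymm hFt hFt'
    have hne : Real.exp (-C * t) ≠ 0 := (Real.exp_pos _).ne'
    simpa [hF, hne] using this
  simp only [hE] at hEt
  have sq0 := mul_self_nonneg (w t)
  have sq1 := mul_self_nonneg (w1 t)
  have sq2 := mul_self_nonneg (w2 t)
  have sq3 := mul_self_nonneg (w3 t)
  refine ⟨?_, ?_, ?_⟩
  · have h' : w t * w t = 0 := le_antisymm (by nlinarith) sq0
    exact mul_self_eq_zero.mp h'
  · have h' : w1 t * w1 t = 0 := le_antisymm (by nlinarith) sq1
    exact mul_self_eq_zero.mp h'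
  · have h' : w2 t * w2 t = 0 := le_antisymm (by nlinarith) sq2
    exact mul_self_eq_zero.mp h'

private noncomputable def gg (A B ω t : ℝ) : ℝ :=
  A * (Real.cosh (ω*t) - Real.cos (ω*t)) + B * (Real.sinh (ω*t) - Real.sin (ω*t))

private noncomputable def gg1 (A B ω t : ℝ) : ℝ :=
  A * ω * (Real.sinh (ω*t) + Real.sin (ω*t)) + B * ω * (Real.cosh (ω*t) - Real.cos (ω*t))

private noncomputable def gg2 (A B ω t : ℝ) : ℝ :=
  A * ω^2 * (Real.cosh (ω*t) + Real.cos (ω*t)) + B * ω^2 * (Real.sinh (ω*t) + Real.sin (ω*t))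

private noncomputable def gg3 (A B ω t : ℝ) : ℝ :=
  A * ω^3 * (Real.sinh (ω*t) - Real.sin (ω*t)) + B * ω^3 * (Real.cosh (ω*t) + Real.cos (ω*t))

private noncomputable def gg4 (A B ω t : ℝ) : ℝ :=
  A * ω^4 * (Real.cosh (ω*t) - Real.cos (ω*t)) + B * ω^4 * (Real.sinh (ω*t) - Real.sin (ω*t))

private lemma dgg0 (A B ω t : ℝ) : HasDerivAt (gg A B ω) (gg1 A B ω t) t := by
  have := (((hd_comp Real.cosh Real.sinh Real.hasDerivAt_cosh ω t).sub
      (hd_comp Real.cos (fun x => -Real.sin x) Real.hasDerivAt_cos ω t)).const_mul A).add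
    (((hd_comp Real.sinh Real.cosh Real.hasDerivAt_sinh ω t).sub
      (hd_comp Real.sin Real.cos Real.hasDerivAt_sin ω t)).const_mul B)
  refine this.congr_deriv ?_
  simp only [gg1]; ring

private lemma dgg1 (A B ω t : ℝ) : HasDerivAt (gg1 A B ω) (gg2 A B ω t) t := by
  have := (((hd_comp Real.sinh Real.cosh Real.hasDerivAt_sinh ω t).add
      (hd_comp Real.sin Real.cos Real.hasDerivAt_sin ω t)).const_mul (A * ω)).add
    (((hd_comp Real.cosh Real.sinh Real.hasDerivAt_cosh ω t).sub
      (hd_comp Real.cos (fun x => -Real.sin x) Real.hasDerivAt_cos ω t)).const_mul (B * ω))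
  refine this.congr_deriv ?_
  simp only [gg2]; ring

private lemma dgg2 (A B ω t : ℝ) : HasDerivAt (gg2 A B ω) (gg3 A B ω t) t := by
  have := (((hd_comp Real.cosh Real.sinh Real.hasDerivAt_cosh ω t).add
      (hd_comp Real.cos (fun x => -Real.sin x) Real.hasDerivAt_cos ω t)).const_mul (A * ω^2)).add
    (((hd_comp Real.sinh Real.cosh Real.hasDerivAt_sinh ω t).add
      (hd_comp Real.sin Real.cos Real.hasDerivAt_sin ω t)).const_mul (B * ω^2))
  refine this.congr_deriv ?_
  simp only [gg3]; ring

private lemma dgg3 (A B ω t : ℝ) : HasDerivAt (gg3 A B ω) (gg4 A B ω t) t := by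
  have := (((hd_comp Real.sinh Real.cosh Real.hasDerivAt_sinh ω t).sub
      (hd_comp Real.sin Real.cos Real.hasDerivAt_sin ω t)).const_mul (A * ω^3)).add
    (((hd_comp Real.cosh Real.sinh Real.hasDerivAt_cosh ω t).add
      (hd_comp Real.cos (fun x => -Real.sin x) Real.hasDerivAt_cos ω t)).const_mul (B * ω^3))
  refine this.congr_deriv ?_
  simp only [gg4]; ring

private lemma contDiff_gg (A B ω : ℝ) {n : WithTop ℕ∞} : ContDiff ℝ n (gg A B ω) := by
  unfold gg
  have hlin : ContDiff ℝ n (fun t : ℝ => ω * t) := contDiff_const.mul contDiff_id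
  exact (contDiff_const.mul ((Real.contDiff_cosh.comp hlin).sub
    (Real.contDiff_cos.comp hlin))).add
    (contDiff_const.mul ((Real.contDiff_sinh.comp hlin).sub (Real.contDiff_sin.comp hlin)))

private lemma deriv_gg (A B ω : ℝ) : deriv (gg A B ω) = gg1 A B ω :=
  funext fun t => (dgg0 A B ω t).deriv

private lemma iteratedDeriv_gg2 (A B ω : ℝ) : iteratedDeriv 2 (gg A B ω) = gg2 A B ω := by
  rw [iteratedDeriv_succ, iteratedDeriv_one, deriv_gg]
  exact funext fun t => (dgg1 A B ω t).deriv

private lemma iteratedDeriv_gg3 (A B ω : ℝ) : iteratedDeriv 3 (gg A B ω) = gg3 A B ω := by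
  rw [iteratedDeriv_succ, iteratedDeriv_gg2]
  exact funext fun t => (dgg2 A B ω t).deriv

private lemma iteratedDeriv_gg4 (A B ω : ℝ) : iteratedDeriv 4 (gg A B ω) = gg4 A B ω := by
  rw [iteratedDeriv_succ, iteratedDeriv_gg3]
  exact funext fun t => (dgg3 A B ω t).deriv

/-- For `T > 0` and `ω = π/(2T)`, the only solution of `h'''' = ω⁴ h` on `[0,T]` with
`h(0) = 0`, `h'(0) = 0`, `h'(T) = 0`, `h''(T) = 0` is the zero function. -/
theorem fourth_order_bvp_unique_zero (T : ℝ) (hT : 0 < T) (h : ℝ → ℝ)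
    (hsm : ContDiff ℝ 4 h)
    (hode : ∀ t ∈ Icc (0:ℝ) T, iteratedDeriv 4 h t = (π/(2*T))^4 * h t)
    (h0 : h 0 = 0) (h0' : deriv h 0 = 0)
    (hT' : deriv h T = 0) (hT'' : iteratedDeriv 2 h T = 0) :
    ∀ t ∈ Icc (0:ℝ) T, h t = 0 := by
  have hπ := Real.pi_pos
  set ω := π / (2*T) with hωdef
  have hω : 0 < ω := div_pos hπ (by linarith)
  have hωne : ω ≠ 0 := ne_of_gt hω
  have hωT : ω * T = π / 2 := by
    rw [hωdef]; field_simp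
  set a := iteratedDeriv 2 h 0 with ha
  set b := iteratedDeriv 3 h 0 with hb
  set A := a / (2*ω^2) with hA
  set B := b / (2*ω^3) with hB
  set w : ℝ → ℝ := fun t => h t - gg A B ω t with hwdef
  have hwc : ContDiff ℝ 4 w := hsm.sub (contDiff_gg A B ω)
  have derivw : ∀ t, deriv w t = deriv h t - gg1 A B ω t := by
    intro t
    rw [hwdef, deriv_fun_sub ((hsm.differentiable (by norm_num : (4:WithTop ℕ∞) ≠ 0)) t)
      (((contDiff_gg A B ω (n := 4)).differentiable (by norm_num : (4:WithTop ℕ∞) ≠ 0)) t), deriv_gg]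
  have iw2 : ∀ t, iteratedDeriv 2 w t = iteratedDeriv 2 h t - gg2 A B ω t := by
    intro t
    rw [hwdef, iteratedDeriv_sub' (hsm.of_le (by norm_num : ((2:ℕ):WithTop ℕ∞) ≤ 4))
      (contDiff_gg A B ω) t, iteratedDeriv_gg2]
  have iw3 : ∀ t, iteratedDeriv 3 w t = iteratedDeriv 3 h t - gg3 A B ω t := by
    intro t
    rw [hwdef, iteratedDeriv_sub' (hsm.of_le (by norm_num : ((3:ℕ):WithTop ℕ∞) ≤ 4))
      (contDiff_gg A B ω) t, iteratedDeriv_gg3]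
  have iw4 : ∀ t, iteratedDeriv 4 w t = iteratedDeriv 4 h t - gg4 A B ω t := by
    intro t
    rw [hwdef, iteratedDeriv_sub' (hsm.of_le (by norm_num : ((4:ℕ):WithTop ℕ∞) ≤ 4))
      (contDiff_gg A B ω) t, iteratedDeriv_gg4]
  have hw0 : w 0 = 0 := by simp [hwdef, gg, h0]
  have hw1 : deriv w 0 = 0 := by
    rw [derivw 0]; simp [gg1, h0']
  have hw2 : iteratedDeriv 2 w 0 = 0 := by
    rw [iw2 0, ← ha]
    simp only [gg2, mul_zero, Real.cosh_zero, Real.cos_zero, Real.sinh_zero, Real.sin_zero]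
    rw [hA]; field_simp; ring
  have hw3 : iteratedDeriv 3 w 0 = 0 := by
    rw [iw3 0, ← hb]
    simp only [gg3, mul_zero, Real.cosh_zero, Real.cos_zero, Real.sinh_zero, Real.sin_zero]
    rw [hB]; field_simp; ring
  have hwode : ∀ t ∈ Icc (0:ℝ) T, iteratedDeriv 4 w t = ω^4 * w t := by
    intro t ht
    rw [iw4 t, hode t ht, hwdef]
    simp only [gg4, gg]
    ring
  have key := ode4_zero T hT (ω^4) (by positivity) w hwc hwode hw0 hw1 hw2 hw3
  have hTmem : T ∈ Icc (0:ℝ) T := ⟨hT.le, le_rfl⟩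
  obtain ⟨-, kd1, kd2⟩ := key T hTmem
  have bc1 : gg1 A B ω T = 0 := by
    have := derivw T
    rw [kd1, hT'] at this
    linarith
  have bc2 : gg2 A B ω T = 0 := by
    have := iw2 T
    rw [kd2, hT''] at this
    linarith
  set s := Real.sinh (π/2) with hs
  set c := Real.cosh (π/2) with hc
  have hspos : 0 < s := by
    rw [hs]; exact Real.sinh_pos_iff.mpr (by positivity)
  have hc2 : c^2 = s^2 + 1 := Real.cosh_sq _
  rw [gg1, hωT, Real.sin_pi_div_two, Real.cos_pi_div_two, ← hs, ← hc] at bc1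
  rw [gg2, hωT, Real.sin_pi_div_two, Real.cos_pi_div_two, ← hs, ← hc] at bc2
  -- bc1 : A*ω*(s+1) + B*ω*(c-0) = 0 ; bc2 : A*ω²*(c+0) + B*ω²*(s+1) = 0
  have h1 : A*(s+1) + B*c = 0 := by
    apply mul_left_cancel₀ hωne
    linear_combination bc1
  have h2 : A*c + B*(s+1) = 0 := by
    apply mul_left_cancel₀ (pow_ne_zero 2 hωne)
    linear_combination bc2
  have hA0 : A = 0 := by
    have h3 : A * (2*s) = 0 := by linear_combination (s+1)*h1 - c*h2 + A*hc2
    have h2s : (2*s) ≠ 0 := by positivity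
    exact (mul_eq_zero.mp h3).resolve_right h2s
  have hB0 : B = 0 := by
    have h4 : B * (s+1) = 0 := by linear_combination h2 - c*hA0
    have hsp : (s+1) ≠ 0 := by positivity
    exact (mul_eq_zero.mp h4).resolve_right hsp
  intro t ht
  obtain ⟨k0, -, -⟩ := key t ht
  rw [hwdef] at k0
  simp only at k0
  have : gg A B ω t = 0 := by rw [gg, hA0, hB0]; ring
  linarith [k0, this]
end

section
/- For T > 0 and ω = π/(2T), given arbitrary real values a and b, there exists a unique solution h of h'''' = ω⁴ h on [0,T] with h(0) = 0, h'(0) = 0, h'(T) = a and h''(T) = b. -/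
open Real Set


noncomputable def Gfun (ω p q r s : ℝ) : ℝ → ℝ :=
  fun t => p * Real.cosh (ω*t) + q * Real.sinh (ω*t) + r * Real.cos (ω*t) + s * Real.sin (ω*t)

lemma Gfun_hasDerivAt (ω p q r s t : ℝ) :
    HasDerivAt (Gfun ω p q r s) (Gfun ω (ω*q) (ω*p) (ω*s) (-(ω*r)) t) t := by
  unfold Gfun
  have hid : HasDerivAt (fun x : ℝ => ω*x) ω t := by simpa using (hasDerivAt_id t).const_mul ω
  exact ((((hid.cosh.const_mul p).add (hid.sinh.const_mul q)).add
    (hid.cos.const_mul r)).add (hid.sin.const_mul s)).congr_deriv (by ring)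

lemma Gfun_contDiff (ω p q r s : ℝ) {n : WithTop ℕ∞} : ContDiff ℝ n (Gfun ω p q r s) := by
  unfold Gfun
  have hc : ContDiff ℝ n (fun t : ℝ => ω*t) := contDiff_const.mul contDiff_id
  exact ((contDiff_const.mul hc.cosh).add (contDiff_const.mul hc.sinh)).add
    (contDiff_const.mul hc.cos) |>.add (contDiff_const.mul hc.sin)

lemma Gfun_congr {ω p q r s p' q' r' s' : ℝ} (hp : p = p') (hq : q = q') (hr : r = r')
    (hs : s = s') : Gfun ω p q r s = Gfun ω p' q' r' s' := by subst hp hq hr hs; rfl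

lemma Gfun_deriv (ω p q r s : ℝ) :
    deriv (Gfun ω p q r s) = Gfun ω (ω*q) (ω*p) (ω*s) (-(ω*r)) :=
  funext fun t => (Gfun_hasDerivAt ω p q r s t).deriv

lemma Gfun_iteratedDeriv_two (ω p q r s : ℝ) :
    iteratedDeriv 2 (Gfun ω p q r s) = Gfun ω (ω^2*p) (ω^2*q) (-(ω^2*r)) (-(ω^2*s)) := by
  rw [iteratedDeriv_succ, iteratedDeriv_one, Gfun_deriv, Gfun_deriv]
  exact Gfun_congr (by ring) (by ring) (by ring) (by ring)

lemma Gfun_iteratedDeriv_three (ω p q r s : ℝ) :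
    iteratedDeriv 3 (Gfun ω p q r s) = Gfun ω (ω^3*q) (ω^3*p) (-(ω^3*s)) (ω^3*r) := by
  rw [iteratedDeriv_succ, Gfun_iteratedDeriv_two, Gfun_deriv]
  exact Gfun_congr (by ring) (by ring) (by ring) (by ring)

lemma Gfun_iteratedDeriv_four (ω p q r s : ℝ) :
    iteratedDeriv 4 (Gfun ω p q r s) = Gfun ω (ω^4*p) (ω^4*q) (ω^4*r) (ω^4*s) := by
  rw [iteratedDeriv_succ, Gfun_iteratedDeriv_three, Gfun_deriv]
  exact Gfun_congr (by ring) (by ring) (by ring) (by ring)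

lemma Gfun_smul (ω c p q r s t : ℝ) :
    Gfun ω (c*p) (c*q) (c*r) (c*s) t = c * Gfun ω p q r s t := by unfold Gfun; ring

lemma Gfun_apply_zero (ω p q r s : ℝ) : Gfun ω p q r s 0 = p + r := by simp [Gfun]

lemma Gfun_apply_T {ω T : ℝ} (hωT : ω*T = π/2) (p q r s : ℝ) :
    Gfun ω p q r s T = p * Real.cosh (π/2) + q * Real.sinh (π/2) + s := by
  unfold Gfun; rw [hωT]; simp

/-- Uniqueness for the Cauchy problem of `f'''' = c f` on `[0,T]`. -/
lemma bvp_cauchy_unique {T c : ℝ} (hT : 0 < T) {f g : ℝ → ℝ}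
    (hf : ContDiff ℝ 4 f) (hg : ContDiff ℝ 4 g)
    (hfO : ∀ t ∈ Icc (0:ℝ) T, iteratedDeriv 4 f t = c * f t)
    (hgO : ∀ t ∈ Icc (0:ℝ) T, iteratedDeriv 4 g t = c * g t)
    (h0 : f 0 = g 0) (h1 : deriv f 0 = deriv g 0)
    (h2 : iteratedDeriv 2 f 0 = iteratedDeriv 2 g 0)
    (h3 : iteratedDeriv 3 f 0 = iteratedDeriv 3 g 0) :
    ∀ t ∈ Icc (0:ℝ) T, f t = g t ∧ deriv f t = deriv g t ∧
      iteratedDeriv 2 f t = iteratedDeriv 2 g t := by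
  set M : Matrix (Fin 4) (Fin 4) ℝ := !![0,1,0,0; 0,0,1,0; 0,0,0,1; c,0,0,0] with hM
  set A := LinearMap.toContinuousLinearMap M.mulVecLin with hA
  set v : ℝ → (Fin 4 → ℝ) → (Fin 4 → ℝ) := fun _ x => A x with hv
  have hlip : ∀ t, LipschitzOnWith ‖A‖₊ (v t) univ := fun t => A.lipschitz.lipschitzOnWith
  set X : (ℝ → ℝ) → ℝ → (Fin 4 → ℝ) := fun f t =>
    ![f t, deriv f t, iteratedDeriv 2 f t, iteratedDeriv 3 f t] with hX
  have key : ∀ (f : ℝ → ℝ), ContDiff ℝ 4 f →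
      (∀ t ∈ Icc (0:ℝ) T, iteratedDeriv 4 f t = c * f t) →
      ContinuousOn (X f) (Icc 0 T) ∧
      ∀ t ∈ Ico (0:ℝ) T, HasDerivWithinAt (X f) (v t (X f t)) (Ici t) t := by
    intro f hf hfO
    have hdk : ∀ k : ℕ, k < 4 → ∀ t : ℝ,
        HasDerivAt (iteratedDeriv k f) (iteratedDeriv (k+1) f t) t := by
      intro k hk t
      have hk' : (k : WithTop ℕ∞) < 4 := by exact_mod_cast hk
      have hd := (hf.differentiable_iteratedDeriv k hk') t
      have := hd.hasDerivAt
      rwa [show deriv (iteratedDeriv k f) t = iteratedDeriv (k+1) f t from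
        by rw [iteratedDeriv_succ]] at this
    constructor
    · apply Continuous.continuousOn
      apply continuous_pi
      intro i
      fin_cases i <;> simp [hX]
      · exact hf.continuous
      · rw [← iteratedDeriv_one]; exact hf.continuous_iteratedDeriv 1 (by norm_num)
      · exact hf.continuous_iteratedDeriv 2 (by norm_num)
      · exact hf.continuous_iteratedDeriv 3 (by norm_num)
    · intro t ht
      have hD : HasDerivAt (X f)
          (![deriv f t, iteratedDeriv 2 f t, iteratedDeriv 3 f t, iteratedDeriv 4 f t]) t := by
        apply hasDerivAt_pi.2
        intro i
        fin_cases i <;> simp [hX]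
        · simpa [iteratedDeriv_zero, iteratedDeriv_one] using hdk 0 (by norm_num) t
        · simpa [iteratedDeriv_one] using hdk 1 (by norm_num) t
        · exact hdk 2 (by norm_num) t
        · exact hdk 3 (by norm_num) t
      have hval : v t (X f t) =
          ![deriv f t, iteratedDeriv 2 f t, iteratedDeriv 3 f t, iteratedDeriv 4 f t] := by
        funext i
        have h4 : iteratedDeriv 4 f t = c * f t := hfO t (Ico_subset_Icc_self ht)
        fin_cases i <;>
          simp [hv, hA, hM, hX, Matrix.mulVecLin_apply, Matrix.mulVec, dotProduct,
            Fin.sum_univ_four, h4]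
      rw [hval]
      exact hD.hasDerivWithinAt
  obtain ⟨hfc, hfd⟩ := key f hf hfO
  obtain ⟨hgc, hgd⟩ := key g hg hgO
  have heq : EqOn (X f) (X g) (Icc 0 T) := by
    apply ODE_solution_unique_of_mem_Icc_right (fun t _ => hlip t) hfc hfd (fun _ _ => trivial) hgc hgd
      (fun _ _ => trivial)
    funext i; fin_cases i <;> simp [hX, h0, h1, h2, h3]
  intro t ht
  have := heq ht
  refine ⟨?_, ?_, ?_⟩
  · have := congrFun this 0; simpa [hX] using this
  · have := congrFun this 1; simpa [hX] using this
  · have := congrFun this 2; simpa [hX] using this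

/-- For `T > 0`, `ω = π/(2T)` and arbitrary `a b : ℝ`, there is a unique solution of
`h'''' = ω⁴ h` on `[0,T]` with `h(0) = 0`, `h'(0) = 0`, `h'(T) = a`, `h''(T) = b`. -/
theorem fourth_order_bvp_exists_unique (T a b : ℝ) (hT : 0 < T) :
    ∃ h : ℝ → ℝ,
      (ContDiff ℝ 4 h ∧
        (∀ t ∈ Icc (0:ℝ) T, iteratedDeriv 4 h t = (π/(2*T))^4 * h t) ∧
        h 0 = 0 ∧ deriv h 0 = 0 ∧ deriv h T = a ∧ iteratedDeriv 2 h T = b) ∧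
      ∀ g : ℝ → ℝ,
        (ContDiff ℝ 4 g ∧
          (∀ t ∈ Icc (0:ℝ) T, iteratedDeriv 4 g t = (π/(2*T))^4 * g t) ∧
          g 0 = 0 ∧ deriv g 0 = 0 ∧ deriv g T = a ∧ iteratedDeriv 2 g T = b) →
        ∀ t ∈ Icc (0:ℝ) T, g t = h t := by
  have hπ : (0:ℝ) < π := Real.pi_pos
  obtain ⟨ω, hω⟩ : ∃ ω : ℝ, ω = π/(2*T) := ⟨_, rfl⟩
  rw [← hω]
  have hωpos : 0 < ω := by rw [hω]; positivity
  have hωne : ω ≠ 0 := ne_of_gt hωpos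
  have hωT : ω * T = π/2 := by rw [hω]; field_simp
  obtain ⟨S, hSdef⟩ : ∃ S : ℝ, S = Real.sinh (π/2) := ⟨_, rfl⟩
  obtain ⟨C, hCdef⟩ : ∃ C : ℝ, C = Real.cosh (π/2) := ⟨_, rfl⟩
  have hS : 0 < S := by rw [hSdef]; exact Real.sinh_pos_iff.2 (by positivity)
  have hSne : (2*S) ≠ 0 := by positivity
  have hC2 : C^2 = S^2 + 1 := by rw [hCdef, hSdef]; exact Real.cosh_sq _
  obtain ⟨α, hα⟩ : ∃ α : ℝ, α = ((S+1)*(a/ω) - C*(b/ω^2))/(2*S) := ⟨_, rfl⟩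
  obtain ⟨β, hβ⟩ : ∃ β : ℝ, β = ((S+1)*(b/ω^2) - C*(a/ω))/(2*S) := ⟨_, rfl⟩
  obtain ⟨h, hh⟩ : ∃ h : ℝ → ℝ, h = Gfun ω α β (-α) (-β) := ⟨_, rfl⟩
  have ea : ω*β*C + ω*α*S + ω*α = a := by
    rw [hα, hβ]; field_simp; linear_combination (-(ω*a))*hC2
  have eb : ω^2*α*C + ω^2*β*S + ω^2*β = b := by
    rw [hα, hβ]; field_simp; linear_combination (-b)*hC2
  have hDT : deriv h T = a := by
    rw [hh, Gfun_deriv, Gfun_apply_T hωT]; rw [← hSdef, ← hCdef]; linarith [ea]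
  have hD2T : iteratedDeriv 2 h T = b := by
    rw [hh, Gfun_iteratedDeriv_two, Gfun_apply_T hωT]; rw [← hSdef, ← hCdef]; linarith [eb]
  have hODEh : ∀ t ∈ Icc (0:ℝ) T, iteratedDeriv 4 h t = ω^4 * h t := by
    intro t _
    rw [hh, Gfun_iteratedDeriv_four]
    exact Gfun_smul ω (ω^4) α β (-α) (-β) t
  refine ⟨h, ⟨hh ▸ Gfun_contDiff _ _ _ _ _, hODEh, ?_, ?_, hDT, hD2T⟩, ?_⟩
  · rw [hh, Gfun_apply_zero]; ring
  · rw [hh, Gfun_deriv, Gfun_apply_zero]; ring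
  · rintro g ⟨hg4, hgO, hg0, hg1, hgT1, hgT2⟩
    obtain ⟨p, hp⟩ : ∃ p : ℝ, p = iteratedDeriv 2 g 0 / (2*ω^2) := ⟨_, rfl⟩
    obtain ⟨q, hq⟩ : ∃ q : ℝ, q = iteratedDeriv 3 g 0 / (2*ω^3) := ⟨_, rfl⟩
    obtain ⟨w, hw⟩ : ∃ w : ℝ → ℝ, w = Gfun ω p q (-p) (-q) := ⟨_, rfl⟩
    have w0 : w 0 = 0 := by rw [hw, Gfun_apply_zero]; ring
    have w1 : deriv w 0 = 0 := by rw [hw, Gfun_deriv, Gfun_apply_zero]; ring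
    have w2 : iteratedDeriv 2 w 0 = iteratedDeriv 2 g 0 := by
      rw [hw, Gfun_iteratedDeriv_two, Gfun_apply_zero, hp]; field_simp; ring
    have w3 : iteratedDeriv 3 w 0 = iteratedDeriv 3 g 0 := by
      rw [hw, Gfun_iteratedDeriv_three, Gfun_apply_zero, hq]; field_simp; ring
    have hODEw : ∀ t ∈ Icc (0:ℝ) T, iteratedDeriv 4 w t = ω^4 * w t := by
      intro t _
      rw [hw, Gfun_iteratedDeriv_four]
      exact Gfun_smul ω (ω^4) p q (-p) (-q) t
    have H := bvp_cauchy_unique hT hg4 (hw ▸ Gfun_contDiff ω p q (-p) (-q)) hgO hODEw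
      (by rw [hg0, w0]) (by rw [hg1, w1]) w2.symm w3.symm
    have hTmem : T ∈ Icc (0:ℝ) T := ⟨le_of_lt hT, le_refl T⟩
    obtain ⟨_, hd1, hd2⟩ := H T hTmem
    have E1 : ω*(q*C + p*S + p) = ω*(β*C + α*S + α) := by
      have h1 : deriv w T = ω*q*C + ω*p*S + ω*p := by
        rw [hw, Gfun_deriv, Gfun_apply_T hωT, ← hSdef, ← hCdef]; ring
      have hwa : ω*q*C + ω*p*S + ω*p = a := by rw [← h1, ← hd1, hgT1]
      rw [show ω*(β*C + α*S + α) = ω*β*C + ω*α*S + ω*α by ring, ea]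
      linarith [hwa]
    have E2 : ω^2*(p*C + q*S + q) = ω^2*(α*C + β*S + β) := by
      have h2 : iteratedDeriv 2 w T = ω^2*p*C + ω^2*q*S + ω^2*q := by
        rw [hw, Gfun_iteratedDeriv_two, Gfun_apply_T hωT, ← hSdef, ← hCdef]; ring
      have hwb : ω^2*p*C + ω^2*q*S + ω^2*q = b := by rw [← h2, ← hd2, hgT2]
      rw [show ω^2*(α*C + β*S + β) = ω^2*α*C + ω^2*β*S + ω^2*β by ring, eb]
      linarith [hwb]
    have E1' : q*C + p*S + p = β*C + α*S + α := mul_left_cancel₀ hωne E1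
    have E2' : p*C + q*S + q = α*C + β*S + β := mul_left_cancel₀ (pow_ne_zero 2 hωne) E2
    have hpα : p = α := by
      have hz : (2*S)*(p-α) = 0 := by linear_combination (S+1)*E1' - C*E2' + (p-α)*hC2
      rcases mul_eq_zero.1 hz with h' | h'
      · exact absurd h' hSne
      · linarith
    have hqβ : q = β := by
      have hz : (2*S)*(q-β) = 0 := by linear_combination (S+1)*E2' - C*E1' + (q-β)*hC2
      rcases mul_eq_zero.1 hz with h' | h'
      · exact absurd h' hSne
      · linarith
    intro t ht
    have := (H t ht).1
    rw [this, hw, hh, hpα, hqβ]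
end

section
/- Let f : ℝ × ℝᴺ × K → ℝᴺ be continuous, Lipschitz in the state variable with uniform constant L₀, and uniformly bounded by M₀. Let u, u' : [0,T] → K be measurable control curves and x, x' : [0,T] → ℝᴺ absolutely continuous solutions of ẋ(t) = f(t, x(t), u(t)) and ẋ'(t) = f(t, x'(t), u'(t)) with initial data x(0), x'(0). Then sup_{t∈[0,T]} |x(t) − x'(t)| ≤ e^{L₀T} ( |x(0) − x'(0)| + 2M₀ · measure{ t ∈ [0,T] : u(t) ≠ u'(t) } ). -/
open Real Set MeasureTheory

/-- Gronwall-type continuity estimate (Lemma 7.2): for a controlled ODE with uniformly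
bounded, uniformly Lipschitz right-hand side, two solutions differ at most by
`e^{L₀T} (|x(0) - x'(0)| + 2 M₀ · meas{t : u t ≠ u' t})`. -/
theorem controlled_ode_continuity_estimate (N M : ℕ) (T : ℝ) (hT : 0 < T)
    (K : Set (Fin M → ℝ)) (hK : IsCompact K)
    (f : ℝ → EuclideanSpace ℝ (Fin N) → (Fin M → ℝ) → EuclideanSpace ℝ (Fin N))
    (L₀ : NNReal) (M₀ : ℝ)
    (hcont : Continuous fun q : ℝ × EuclideanSpace ℝ (Fin N) × (Fin M → ℝ) =>
      f q.1 q.2.1 q.2.2)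
    (hlip : ∀ t u, u ∈ K → LipschitzWith L₀ (fun x => f t x u))
    (hbd : ∀ t x u, u ∈ K → ‖f t x u‖ ≤ M₀)
    (u u' : ℝ → Fin M → ℝ) (hu : Measurable u) (hu' : Measurable u')
    (huK : ∀ t, u t ∈ K) (hu'K : ∀ t, u' t ∈ K)
    (x x' : ℝ → EuclideanSpace ℝ (Fin N)) (hx : Continuous x) (hx' : Continuous x')
    (hxeq : ∀ t ∈ Icc (0:ℝ) T, x t = x 0 + ∫ s in (0:ℝ)..t, f s (x s) (u s))
    (hx'eq : ∀ t ∈ Icc (0:ℝ) T, x' t = x' 0 + ∫ s in (0:ℝ)..t, f s (x' s) (u' s)) :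
    ∀ t ∈ Icc (0:ℝ) T,
      ‖x t - x' t‖ ≤ Real.exp ((L₀ : ℝ) * T) *
        (‖x 0 - x' 0‖ +
          2 * M₀ * (volume {t : ℝ | t ∈ Icc (0:ℝ) T ∧ u t ≠ u' t}).toReal) := by
  set L : ℝ := (L₀ : ℝ) with hL
  have hL0 : 0 ≤ L := L₀.coe_nonneg
  have hM0 : 0 ≤ M₀ := le_trans (norm_nonneg _) (hbd 0 (x 0) (u 0) (huK 0))
  set D : Set ℝ := {s | u s ≠ u' s} with hDdef
  have hD : MeasurableSet D := (measurableSet_eq_fun hu hu').compl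
  set E : Set ℝ := {t : ℝ | t ∈ Icc (0:ℝ) T ∧ u t ≠ u' t} with hEdef
  set μE : ℝ := (volume E).toReal with hμE
  have hμE0 : 0 ≤ μE := ENNReal.toReal_nonneg
  have hEfin : volume E < ⊤ :=
    lt_of_le_of_lt (measure_mono fun s hs => hs.1) measure_Icc_lt_top
  set A : ℝ := ‖x 0 - x' 0‖ + 2 * M₀ * μE with hA
  have hA0 : 0 ≤ A := by positivity
  set g : ℝ → ℝ := fun s => ‖x s - x' s‖ with hg
  have hgc : Continuous g := (hx.sub hx').norm
  have hg0 : ∀ s, 0 ≤ g s := fun s => norm_nonneg _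
  -- measurability/integrability of the RHS along solutions
  have measF : Measurable fun s => f s (x s) (u s) :=
    hcont.measurable.comp (measurable_id.prodMk (hx.measurable.prodMk hu))
  have measF' : Measurable fun s => f s (x' s) (u' s) :=
    hcont.measurable.comp (measurable_id.prodMk (hx'.measurable.prodMk hu'))
  have intF : ∀ t : ℝ, IntervalIntegrable (fun s => f s (x s) (u s)) volume 0 t := by
    intro t
    apply IntervalIntegrable.mono_fun' (g := fun _ => M₀) (intervalIntegrable_const)
      measF.aestronglyMeasurable.restrict
    filter_upwards with s using hbd s (x s) (u s) (huK s)
  have intF' : ∀ t : ℝ, IntervalIntegrable (fun s => f s (x' s) (u' s)) volume 0 t := by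
    intro t
    apply IntervalIntegrable.mono_fun' (g := fun _ => M₀) (intervalIntegrable_const)
      measF'.aestronglyMeasurable.restrict
    filter_upwards with s using hbd s (x' s) (u' s) (hu'K s)
  -- the indicator bound function
  set φ : ℝ → ℝ := D.indicator (fun _ => 2 * M₀) with hφ
  have intφ : ∀ t : ℝ, IntervalIntegrable φ volume 0 t := by
    intro t
    apply IntervalIntegrable.mono_fun' (g := fun _ => 2 * M₀) (intervalIntegrable_const)
    · exact ((measurable_const.indicator hD).aestronglyMeasurable).restrict
    · filter_upwards with s
      rw [Real.norm_eq_abs]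
      by_cases hs : s ∈ D
      · rw [hφ, Set.indicator_of_mem hs, abs_of_nonneg (by positivity)]
      · rw [hφ, Set.indicator_of_notMem hs, abs_zero]; positivity
  -- pointwise bound on the difference of RHS
  have hpt : ∀ s, ‖f s (x s) (u s) - f s (x' s) (u' s)‖ ≤ L * g s + φ s := by
    intro s
    by_cases h : u s = u' s
    · have hs : s ∉ D := by simp [hDdef, h]
      rw [hφ, Set.indicator_of_notMem hs, h]
      have := (hlip s (u' s) (hu'K s)).dist_le_mul (x s) (x' s)
      rw [dist_eq_norm, dist_eq_norm] at this
      simpa [add_zero] using this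
    · have hs : s ∈ D := h
      rw [hφ, Set.indicator_of_mem hs]
      calc ‖f s (x s) (u s) - f s (x' s) (u' s)‖
          ≤ ‖f s (x s) (u s)‖ + ‖f s (x' s) (u' s)‖ := norm_sub_le _ _
        _ ≤ M₀ + M₀ := add_le_add (hbd _ _ _ (huK s)) (hbd _ _ _ (hu'K s))
        _ ≤ L * g s + 2 * M₀ := by nlinarith [mul_nonneg hL0 (hg0 s)]
  -- integral of indicator is bounded by 2 M₀ μE
  have hφint : ∀ t ∈ Icc (0:ℝ) T, (∫ s in (0:ℝ)..t, φ s) ≤ 2 * M₀ * μE := by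
    intro t ht
    rw [intervalIntegral.integral_of_le ht.1, hφ, setIntegral_indicator hD,
      setIntegral_const, smul_eq_mul]
    have hsub : Ioc (0:ℝ) t ∩ D ⊆ E := by
      rintro s ⟨hs1, hs2⟩
      exact ⟨⟨le_of_lt hs1.1, hs1.2.trans ht.2⟩, hs2⟩
    have hmono := ENNReal.toReal_mono hEfin.ne (measure_mono hsub)
    have hnn : (0:ℝ) ≤ (volume (Ioc (0:ℝ) t ∩ D)).toReal := ENNReal.toReal_nonneg
    rw [measureReal_def]
    nlinarith
  -- key integral inequality
  have key : ∀ t ∈ Icc (0:ℝ) T, g t ≤ A + L * ∫ s in (0:ℝ)..t, g s := by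
    intro t ht
    have hxt := hxeq t ht
    have hx't := hx'eq t ht
    have hsub : x t - x' t = (x 0 - x' 0) +
        ∫ s in (0:ℝ)..t, (f s (x s) (u s) - f s (x' s) (u' s)) := by
      rw [hxt, hx't, intervalIntegral.integral_sub (intF t) (intF' t)]
      abel
    have h1 : g t ≤ ‖x 0 - x' 0‖ + ∫ s in (0:ℝ)..t, ‖f s (x s) (u s) - f s (x' s) (u' s)‖ := by
      simp only [hg]; rw [hsub]
      refine le_trans (norm_add_le _ _) (add_le_add_right ?_ _)
      exact intervalIntegral.norm_integral_le_integral_norm ht.1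
    have h2 : (∫ s in (0:ℝ)..t, ‖f s (x s) (u s) - f s (x' s) (u' s)‖)
        ≤ ∫ s in (0:ℝ)..t, (L * g s + φ s) := by
      apply intervalIntegral.integral_mono_on ht.1 ((intF t).sub (intF' t)).norm
        (((hgc.intervalIntegrable 0 t).const_mul L).add (intφ t))
      intro s _
      exact hpt s
    have h3 : (∫ s in (0:ℝ)..t, (L * g s + φ s)) =
        L * (∫ s in (0:ℝ)..t, g s) + ∫ s in (0:ℝ)..t, φ s := by
      rw [intervalIntegral.integral_add ((hgc.intervalIntegrable 0 t).const_mul L) (intφ t),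
        intervalIntegral.integral_const_mul]
    have := hφint t ht
    calc g t ≤ ‖x 0 - x' 0‖ + ∫ s in (0:ℝ)..t, ‖f s (x s) (u s) - f s (x' s) (u' s)‖ := h1
      _ ≤ ‖x 0 - x' 0‖ + (L * (∫ s in (0:ℝ)..t, g s) + ∫ s in (0:ℝ)..t, φ s) := by
          refine add_le_add_right ?_ _; rw [← h3]; exact h2
      _ ≤ A + L * ∫ s in (0:ℝ)..t, g s := by rw [hA]; linarith
  -- Gronwall
  set h : ℝ → ℝ := fun t => ∫ s in (0:ℝ)..t, g s with hh
  have hderiv : ∀ t : ℝ, HasDerivAt h (g t) t := fun t =>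
    intervalIntegral.integral_hasDerivAt_right (hgc.intervalIntegrable 0 t)
      (hgc.stronglyMeasurableAtFilter volume (nhds t)) hgc.continuousAt
  have hhnn : ∀ t ∈ Icc (0:ℝ) T, 0 ≤ h t := by
    intro t ht
    rw [hh]
    apply intervalIntegral.integral_nonneg ht.1
    intro s _; exact hg0 s
  have hgron : ∀ t ∈ Icc (0:ℝ) T, ‖h t‖ ≤ gronwallBound 0 L A (t - 0) := by
    apply norm_le_gronwallBound_of_norm_deriv_right_le
      (f' := g) (fun t _ => (hderiv t).continuousAt.continuousWithinAt)
      (fun t _ => (hderiv t).hasDerivWithinAt)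
    · simp [hh]
    · intro t ht
      have := key t (Ico_subset_Icc_self ht)
      rw [Real.norm_eq_abs, abs_of_nonneg (hg0 t), Real.norm_eq_abs,
        abs_of_nonneg (hhnn t (Ico_subset_Icc_self ht))]
      linarith
  intro t ht
  have hkey := key t ht
  have hg2 := hgron t ht
  rw [Real.norm_eq_abs, abs_of_nonneg (hhnn t ht)] at hg2
  have hbound : A + L * gronwallBound 0 L A (t - 0) ≤ Real.exp (L * T) * A := by
    rcases eq_or_ne L 0 with h0 | h0
    · rw [h0]
      simp
    · rw [gronwallBound_of_K_ne_0 h0]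
      have hLpos : 0 < L := lt_of_le_of_ne hL0 (Ne.symm h0)
      have : A + L * (0 * Real.exp (L * (t - 0)) + A / L * (Real.exp (L * (t - 0)) - 1))
          = A * Real.exp (L * t) := by field_simp; ring
      rw [this]
      have : Real.exp (L * t) ≤ Real.exp (L * T) :=
        Real.exp_le_exp.mpr (mul_le_mul_of_nonneg_left ht.2 hL0)
      nlinarith
  have : g t ≤ Real.exp (L * T) * A := by
    have := mul_le_mul_of_nonneg_left hg2 hL0
    nlinarith
  simpa [hA] using this
end

section
/- Let f : ℝ × ℝᴺ × K → ℝᴺ and controls u_ε : [0,T] → K, ε ∈ (0, ε₀], be as in the previous estimate, and suppose u_ε differs from a fixed control u₀ only on a set of measure at most ε. If x_ε solves ẋ = f(t, x, u_ε(t)) with x_ε(0) = x₀(0) and x₀ solves the equation with control u₀, then x_ε converges uniformly to x₀ on [0,T] as ε → 0⁺. -/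
open Real Set MeasureTheory

lemma gronwall_integral (v : ℝ → ℝ) (hv : Continuous v) (hvnn : ∀ t, 0 ≤ v t)
    (a L T : ℝ) (hL : 0 < L) (ha : 0 ≤ a)
    (h : ∀ t ∈ Icc (0:ℝ) T, v t ≤ a + L * ∫ s in (0:ℝ)..t, v s) :
    ∀ t ∈ Icc (0:ℝ) T, v t ≤ a * Real.exp (L * T) := by
  intro t ht
  set g : ℝ → ℝ := fun t => ∫ s in (0:ℝ)..t, v s with hg
  have hgderiv : ∀ s : ℝ, HasDerivAt g (v s) s := fun s =>
    intervalIntegral.integral_hasDerivAt_right (hv.intervalIntegrable 0 s)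
      (hv.stronglyMeasurable.stronglyMeasurableAtFilter) hv.continuousAt
  have hgnn : ∀ s ∈ Icc (0:ℝ) T, 0 ≤ g s := fun s hs =>
    intervalIntegral.integral_nonneg hs.1 (fun r _ => hvnn r)
  have key : ∀ s ∈ Icc (0:ℝ) T, ‖g s‖ ≤ gronwallBound 0 L a (s - 0) := by
    apply norm_le_gronwallBound_of_norm_deriv_right_le
    · exact (continuous_iff_continuousAt.2 fun s => (hgderiv s).continuousAt).continuousOn
    · exact fun s hs => (hgderiv s).hasDerivWithinAt
    · simp [hg]
    · intro s hs
      have h1 : ‖v s‖ = v s := Real.norm_of_nonneg (hvnn s)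
      have h2 : ‖g s‖ = g s := Real.norm_of_nonneg (hgnn s ⟨hs.1, hs.2.le⟩)
      rw [h1, h2]
      have := h s ⟨hs.1, hs.2.le⟩
      linarith
  have hgb := key t ht
  have h2 : ‖g t‖ = g t := Real.norm_of_nonneg (hgnn t ht)
  rw [h2, sub_zero, gronwallBound_of_K_ne_0 hL.ne'] at hgb
  have hexp : Real.exp (L * t) ≤ Real.exp (L * T) :=
    Real.exp_le_exp.mpr (by nlinarith [ht.2])
  have hvt : v t ≤ a + L * (0 * Real.exp (L * t) + a / L * (Real.exp (L * t) - 1)) := by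
    have := h t ht
    nlinarith [hgb]
  have e : a + L * (0 * Real.exp (L * t) + a / L * (Real.exp (L * t) - 1))
      = a * Real.exp (L * t) := by
    field_simp; ring
  rw [e] at hvt
  nlinarith [Real.exp_pos (L*t)]

/-- Convergence of needle-modified trajectories (Lemma 7.3): if the controls `u ε` differ
from `u₀` only on sets of measure at most `ε`, then the corresponding solutions converge
uniformly on `[0,T]` to the solution with control `u₀` as `ε → 0⁺`. -/
theorem needle_trajectories_converge (N M : ℕ) (T : ℝ) (hT : 0 < T)
    (K : Set (Fin M → ℝ)) (hK : IsCompact K)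
    (f : ℝ → EuclideanSpace ℝ (Fin N) → (Fin M → ℝ) → EuclideanSpace ℝ (Fin N))
    (L₀ : NNReal) (M₀ : ℝ)
    (hcont : Continuous fun q : ℝ × EuclideanSpace ℝ (Fin N) × (Fin M → ℝ) =>
      f q.1 q.2.1 q.2.2)
    (hlip : ∀ t u, u ∈ K → LipschitzWith L₀ (fun x => f t x u))
    (hbd : ∀ t x u, u ∈ K → ‖f t x u‖ ≤ M₀)
    (ε₀ : ℝ) (hε₀ : 0 < ε₀)
    (u : ℝ → ℝ → Fin M → ℝ) (u₀ : ℝ → Fin M → ℝ)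
    (hu : ∀ ε ∈ Ioc (0:ℝ) ε₀, Measurable (u ε)) (hu₀ : Measurable u₀)
    (huK : ∀ ε ∈ Ioc (0:ℝ) ε₀, ∀ t, u ε t ∈ K) (hu₀K : ∀ t, u₀ t ∈ K)
    (hsmall : ∀ ε ∈ Ioc (0:ℝ) ε₀,
      volume {t : ℝ | t ∈ Icc (0:ℝ) T ∧ u ε t ≠ u₀ t} ≤ ENNReal.ofReal ε)
    (x : ℝ → ℝ → EuclideanSpace ℝ (Fin N)) (x₀ : ℝ → EuclideanSpace ℝ (Fin N))
    (hxc : ∀ ε ∈ Ioc (0:ℝ) ε₀, Continuous (x ε)) (hx₀c : Continuous x₀)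
    (hinit : ∀ ε ∈ Ioc (0:ℝ) ε₀, x ε 0 = x₀ 0)
    (hxeq : ∀ ε ∈ Ioc (0:ℝ) ε₀, ∀ t ∈ Icc (0:ℝ) T,
      x ε t = x ε 0 + ∫ s in (0:ℝ)..t, f s (x ε s) (u ε s))
    (hx₀eq : ∀ t ∈ Icc (0:ℝ) T, x₀ t = x₀ 0 + ∫ s in (0:ℝ)..t, f s (x₀ s) (u₀ s)) :
    TendstoUniformlyOn x x₀ (nhdsWithin 0 (Ioc (0:ℝ) ε₀)) (Icc (0:ℝ) T) := by
  have hM₀ : 0 ≤ M₀ := le_trans (norm_nonneg _) (hbd 0 0 (u₀ 0) (hu₀K 0))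
  set L : ℝ := (L₀ : ℝ) + 1 with hLdef
  have hL : 0 < L := by positivity
  set C : ℝ := 2 * M₀ * Real.exp (L * T) with hCdef
  have hC : 0 ≤ C := by positivity
  -- integrability helper
  have intOf : ∀ (g : ℝ → EuclideanSpace ℝ (Fin N)) (c : ℝ), Measurable g →
      (∀ s, ‖g s‖ ≤ c) → ∀ a b : ℝ, IntervalIntegrable g volume a b := by
    intro g c hg hgb a b
    constructor <;>
      exact Integrable.mono' (integrableOn_const measure_Ioc_lt_top.ne)
        hg.aestronglyMeasurable (ae_of_all _ hgb)
  -- main estimate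
  have main : ∀ ε ∈ Ioc (0:ℝ) ε₀, ∀ t ∈ Icc (0:ℝ) T, ‖x ε t - x₀ t‖ ≤ C * ε := by
    intro ε hε
    have hεK := huK ε hε
    have hεu := hu ε hε
    have hεc := hxc ε hε
    set gε : ℝ → EuclideanSpace ℝ (Fin N) := fun s => f s (x ε s) (u ε s) with hgε
    set g₀ : ℝ → EuclideanSpace ℝ (Fin N) := fun s => f s (x₀ s) (u₀ s) with hg₀
    have measgε : Measurable gε :=
      hcont.measurable.comp (measurable_id.prodMk (hεc.measurable.prodMk hεu))
    have measg₀ : Measurable g₀ :=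
      hcont.measurable.comp (measurable_id.prodMk (hx₀c.measurable.prodMk hu₀))
    have bdgε : ∀ s, ‖gε s‖ ≤ M₀ := fun s => hbd s _ _ (hεK s)
    have bdg₀ : ∀ s, ‖g₀ s‖ ≤ M₀ := fun s => hbd s _ _ (hu₀K s)
    have intgε := intOf gε M₀ measgε bdgε
    have intg₀ := intOf g₀ M₀ measg₀ bdg₀
    set v : ℝ → ℝ := fun s => ‖x ε s - x₀ s‖ with hvdef
    have hvcont : Continuous v := (hεc.sub hx₀c).norm
    have hvnn : ∀ s, 0 ≤ v s := fun s => norm_nonneg _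
    set h : ℝ → ℝ := fun s => ‖f s (x₀ s) (u ε s) - g₀ s‖ with hhdef
    have meash : Measurable h := by
      have : Measurable fun s => f s (x₀ s) (u ε s) :=
        hcont.measurable.comp (measurable_id.prodMk (hx₀c.measurable.prodMk hεu))
      exact (this.sub measg₀).norm
    have bdh : ∀ s, ‖h s‖ ≤ 2 * M₀ := by
      intro s
      rw [Real.norm_of_nonneg (norm_nonneg _)]
      calc ‖f s (x₀ s) (u ε s) - g₀ s‖ ≤ ‖f s (x₀ s) (u ε s)‖ + ‖g₀ s‖ := norm_sub_le _ _
        _ ≤ M₀ + M₀ := add_le_add (hbd s _ _ (hεK s)) (bdg₀ s)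
        _ = 2 * M₀ := by ring
    set S : Set ℝ := {t : ℝ | t ∈ Icc (0:ℝ) T ∧ u ε t ≠ u₀ t} with hSdef
    have hSm : MeasurableSet S := by
      have : S = Icc (0:ℝ) T ∩ {t | u ε t ≠ u₀ t} := rfl
      rw [this]
      exact measurableSet_Icc.inter (measurableSet_eq_fun hεu hu₀).compl
    -- key integral inequality
    have key : ∀ t ∈ Icc (0:ℝ) T, v t ≤ 2 * M₀ * ε + L * ∫ s in (0:ℝ)..t, v s := by
      intro t ht
      have ht0 : (0:ℝ) ≤ t := ht.1
      have e1 : x ε t - x₀ t = ∫ s in (0:ℝ)..t, (gε s - g₀ s) := by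
        rw [intervalIntegral.integral_sub (intgε 0 t) (intg₀ 0 t)]
        rw [hxeq ε hε t ht, hx₀eq t ht, hinit ε hε]
        abel
      have step1 : v t ≤ ∫ s in (0:ℝ)..t, ‖gε s - g₀ s‖ := by
        rw [hvdef]; dsimp only
        rw [e1]
        exact intervalIntegral.norm_integral_le_integral_norm ht0
      have inth : IntervalIntegrable h volume 0 t := by
        have := intOf (fun s => f s (x₀ s) (u ε s) - g₀ s) (2*M₀)
          ((hcont.measurable.comp (measurable_id.prodMk
            (hx₀c.measurable.prodMk hεu))).sub measg₀)
          (fun s => le_trans (le_abs_self (h s)) (by simpa using bdh s)) 0 t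
        exact this.norm
      have intRHS : IntervalIntegrable (fun s => (L₀:ℝ) * v s + h s) volume 0 t :=
        ((continuous_const.mul hvcont).intervalIntegrable 0 t).add inth
      have step2 : (∫ s in (0:ℝ)..t, ‖gε s - g₀ s‖)
          ≤ ∫ s in (0:ℝ)..t, ((L₀:ℝ) * v s + h s) := by
        apply intervalIntegral.integral_mono_on ht0 ((intgε 0 t).sub (intg₀ 0 t)).norm intRHS
        intro s hs
        have lip := (hlip s (u ε s) (hεK s)).dist_le_mul (x ε s) (x₀ s)
        rw [dist_eq_norm] at lip
        calc ‖gε s - g₀ s‖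
            ≤ ‖gε s - f s (x₀ s) (u ε s)‖ + ‖f s (x₀ s) (u ε s) - g₀ s‖ := by
              have : gε s - g₀ s = (gε s - f s (x₀ s) (u ε s)) + (f s (x₀ s) (u ε s) - g₀ s) := by
                abel
              rw [this]; exact norm_add_le _ _
          _ ≤ (L₀:ℝ) * v s + h s := add_le_add lip le_rfl
      have step3 : (∫ s in (0:ℝ)..t, ((L₀:ℝ) * v s + h s))
          = (L₀:ℝ) * (∫ s in (0:ℝ)..t, v s) + ∫ s in (0:ℝ)..t, h s := by
        rw [intervalIntegral.integral_add (f := fun s => (L₀:ℝ) * v s) ((continuous_const.mul hvcont).intervalIntegrable 0 t) inth,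
          intervalIntegral.integral_const_mul]
      have step4 : (∫ s in (0:ℝ)..t, h s) ≤ 2 * M₀ * ε := by
        rw [intervalIntegral.integral_of_le ht0]
        have hmono : ∀ s ∈ Ioc (0:ℝ) t, h s ≤ S.indicator (fun _ => 2 * M₀) s := by
          intro s hs
          by_cases hne : u ε s = u₀ s
          · have : h s = 0 := by simp [hhdef, hg₀, hne]
            rw [this]
            exact Set.indicator_nonneg (fun _ _ => by positivity) s
          · have hsS : s ∈ S := ⟨⟨hs.1.le, hs.2.trans ht.2⟩, hne⟩
            rw [Set.indicator_of_mem hsS]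
            exact le_trans (le_abs_self (h s)) (by simpa using bdh s)
        have intInd : IntegrableOn (S.indicator (fun _ => 2 * M₀)) (Ioc (0:ℝ) t) volume := by
          exact (integrableOn_const measure_Ioc_lt_top.ne).indicator hSm
        calc (∫ s in Ioc (0:ℝ) t, h s)
            ≤ ∫ s in Ioc (0:ℝ) t, S.indicator (fun _ => 2 * M₀) s :=
              setIntegral_mono_on (inth.1) intInd measurableSet_Ioc hmono
          _ = ∫ s in Ioc (0:ℝ) t ∩ S, (2 * M₀ : ℝ) := by
              rw [setIntegral_indicator hSm]
          _ = (volume (Ioc (0:ℝ) t ∩ S)).toReal * (2 * M₀) := by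
              rw [setIntegral_const]; simp [smul_eq_mul, Measure.real]
          _ ≤ ε * (2 * M₀) := by
              apply mul_le_mul_of_nonneg_right _ (by positivity)
              apply ENNReal.toReal_le_of_le_ofReal hε.1.le
              exact le_trans (measure_mono inter_subset_right) (hsmall ε hε)
          _ = 2 * M₀ * ε := by ring
      have hIv : 0 ≤ ∫ s in (0:ℝ)..t, v s :=
        intervalIntegral.integral_nonneg ht0 (fun s _ => hvnn s)
      have hL₀L : (L₀:ℝ) ≤ L := by rw [hLdef]; linarith
      calc v t ≤ ∫ s in (0:ℝ)..t, ‖gε s - g₀ s‖ := step1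
        _ ≤ (L₀:ℝ) * (∫ s in (0:ℝ)..t, v s) + ∫ s in (0:ℝ)..t, h s := by rw [← step3]; exact step2
        _ ≤ (L₀:ℝ) * (∫ s in (0:ℝ)..t, v s) + 2 * M₀ * ε := by linarith [step4]
        _ ≤ 2 * M₀ * ε + L * ∫ s in (0:ℝ)..t, v s := by nlinarith
    have := gronwall_integral v hvcont hvnn (2 * M₀ * ε) L T hL (by nlinarith [hε.1.le]) key
    intro t ht
    calc ‖x ε t - x₀ t‖ ≤ 2 * M₀ * ε * Real.exp (L * T) := this t ht
      _ = C * ε := by rw [hCdef]; ring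
  -- conclude uniform convergence
  rw [Metric.tendstoUniformlyOn_iff]
  intro η hη
  have hC1 : (0:ℝ) < C + 1 := by linarith
  have hsm : ∀ᶠ ε in nhdsWithin 0 (Ioc (0:ℝ) ε₀), ε < η / (C + 1) :=
    eventually_nhdsWithin_of_eventually_nhds
      ((Filter.tendsto_id.eventually_lt_const (by positivity)))
  filter_upwards [hsm, self_mem_nhdsWithin] with ε h1 h2
  intro t ht
  have hb := main ε h2 t ht
  rw [dist_comm, dist_eq_norm]
  have hdiv : (C + 1) * (η / (C + 1)) = η := mul_div_cancel₀ η hC1.ne'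
  have : C * ε ≤ (C + 1) * ε := by nlinarith [h2.1.le]
  have : (C + 1) * ε < η := by nlinarith [h2.1, h1]
  linarith [hb]
end

section
/- For T > 0, ω = π/(2T), and prescribed real numbers a, b, the unique solution of h'''' = ω⁴ h on [0,T] with h(0) = 0, h'(0) = 0, h'(T) = a, h''(T) = b has coefficients (A,B,C,D) in the representation h(t) = A e^{ωt} + B e^{−ωt} + C cos(ωt) + D sin(ωt) given by (A,B,C,D)ᵀ = 𝒜⁻¹ (0, 0, a, b)ᵀ, where 𝒜 is the matrix with rows (1,1,1,0), (ω,−ω,0,ω), (ω e^{π/2}, −ω e^{−π/2}, −ω, 0), (ω² e^{π/2}, ω² e^{−π/2}, 0, −ω²). -/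
open Real Set

/-- First-order linear ODE on an interval. -/
lemma lin1 (c S : ℝ) (f : ℝ → ℝ) (hf : Differentiable ℝ f)
    (hode : ∀ t ∈ Icc (0:ℝ) S, deriv f t = c * f t) :
    ∀ t ∈ Icc (0:ℝ) S, f t = f 0 * Real.exp (c * t) := by
  intro t ht
  have key : ∀ x ∈ Icc (0:ℝ) S, f x * Real.exp (-(c*x)) = f 0 * Real.exp (-(c*0)) := by
    apply constant_of_has_deriv_right_zero
    · exact (hf.continuous.mul (by fun_prop)).continuousOn
    · intro x hx
      have h1 : HasDerivAt f (c * f x) x := by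
        have := (hf x).hasDerivAt
        rwa [hode x (Ico_subset_Icc_self hx)] at this
      have h2 : HasDerivAt (fun t => Real.exp (-(c*t))) (-c * Real.exp (-(c*x))) x := by
        have hl : HasDerivAt (fun t : ℝ => -(c*t)) (-c) x := by
          exact ((hasDerivAt_id x).const_mul c).neg.congr_deriv (by ring)
        have := (Real.hasDerivAt_exp (-(c*x))).comp x hl
        exact this.congr_deriv (by ring)
      have h3 := h1.mul h2
      have : HasDerivAt (fun x => f x * Real.exp (-(c*x))) 0 x := by
        exact h3.congr_deriv (by ring)
      exact this.hasDerivWithinAt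
  have hE := key t ht
  have hne : Real.exp (-(c*t)) ≠ 0 := Real.exp_ne_zero _
  have : f t = f 0 * Real.exp (-(c*0)) / Real.exp (-(c*t)) := by
    field_simp at hE ⊢; linarith [hE]
  rw [this]
  rw [div_eq_iff hne, mul_assoc, ← Real.exp_add]
  norm_num

/-- Oscillator with zero initial data vanishes. -/
lemma osc0 (ω S : ℝ) (f : ℝ → ℝ) (hf : Differentiable ℝ f)
    (hf1 : Differentiable ℝ (deriv f))
    (hode : ∀ t ∈ Icc (0:ℝ) S, deriv (deriv f) t = -(ω^2) * f t)
    (hz0 : f 0 = 0) (hz1 : deriv f 0 = 0) (hω : ω ≠ 0) :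
    ∀ t ∈ Icc (0:ℝ) S, f t = 0 ∧ deriv f t = 0 := by
  have key : ∀ x ∈ Icc (0:ℝ) S,
      (deriv f x)^2 + ω^2 * (f x)^2 = (deriv f 0)^2 + ω^2 * (f 0)^2 := by
    apply constant_of_has_deriv_right_zero
    · exact ((hf1.continuous.pow 2).add
        ((continuous_const.mul (hf.continuous.pow 2)))).continuousOn
    · intro x hx
      have h1 : HasDerivAt f (deriv f x) x := (hf x).hasDerivAt
      have h2 : HasDerivAt (deriv f) (-(ω^2) * f x) x := by
        have := (hf1 x).hasDerivAt
        rwa [hode x (Ico_subset_Icc_self hx)] at this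
      have h3 : HasDerivAt (fun x => (deriv f x)^2 + ω^2 * (f x)^2)
          (2 * deriv f x * (-(ω^2) * f x) + ω^2 * (2 * f x * deriv f x)) x := by
        have e1 : HasDerivAt (fun x => (deriv f x)^2) (2 * deriv f x * (-(ω^2) * f x)) x := by
          exact (h2.pow 2).congr_deriv (by norm_num)
        have e2 : HasDerivAt (fun x => ω^2 * (f x)^2) (ω^2 * (2 * f x * deriv f x)) x := by
          have := (h1.pow 2).const_mul (ω^2)
          simpa [mul_comm, mul_assoc, mul_left_comm] using this
        exact e1.add e2
      have : HasDerivAt (fun x => (deriv f x)^2 + ω^2 * (f x)^2) 0 x := by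
        convert h3 using 1; ring
      exact this.hasDerivWithinAt
  intro t ht
  have hE := key t ht
  rw [hz0, hz1] at hE
  have hω2 : 0 < ω^2 := by positivity
  have hfz : f t ^ 2 = 0 := by nlinarith [sq_nonneg (deriv f t), sq_nonneg (f t)]
  have hdz : deriv f t ^ 2 = 0 := by nlinarith [sq_nonneg (f t)]
  exact ⟨pow_eq_zero_iff (by norm_num) |>.mp hfz, pow_eq_zero_iff (by norm_num) |>.mp hdz⟩

lemma hasDerivAt_exp_mul (c x : ℝ) :
    HasDerivAt (fun t => Real.exp (c*t)) (c * Real.exp (c*x)) x := by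
  have hl : HasDerivAt (fun t : ℝ => c*t) c x := by
    simpa using (hasDerivAt_id x).const_mul c
  have := (Real.hasDerivAt_exp (c*x)).comp x hl
  exact this.congr_deriv (by ring)

lemma hasDerivAt_cos_mul (c x : ℝ) :
    HasDerivAt (fun t => Real.cos (c*t)) (-(c * Real.sin (c*x))) x := by
  have hl : HasDerivAt (fun t : ℝ => c*t) c x := by
    simpa using (hasDerivAt_id x).const_mul c
  have := (Real.hasDerivAt_cos (c*x)).comp x hl
  exact this.congr_deriv (by ring)

lemma hasDerivAt_sin_mul (c x : ℝ) :
    HasDerivAt (fun t => Real.sin (c*t)) (c * Real.cos (c*x)) x := by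
  have hl : HasDerivAt (fun t : ℝ => c*t) c x := by
    simpa using (hasDerivAt_id x).const_mul c
  have := (Real.hasDerivAt_sin (c*x)).comp x hl
  exact this.congr_deriv (by ring)

/-- f'' = ω² f with zero initial data vanishes. -/
lemma expz (ω S : ℝ) (f : ℝ → ℝ) (hf : Differentiable ℝ f)
    (hf1 : Differentiable ℝ (deriv f))
    (hode : ∀ t ∈ Icc (0:ℝ) S, deriv (deriv f) t = ω^2 * f t)
    (hz0 : f 0 = 0) (hz1 : deriv f 0 = 0) :
    ∀ t ∈ Icc (0:ℝ) S, f t = 0 ∧ deriv f t = 0 := by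
  set w : ℝ → ℝ := fun t => deriv f t - ω * f t with hw
  have hwdiff : Differentiable ℝ w := hf1.sub (hf.const_mul ω)
  have hwderiv : ∀ x, deriv w x = deriv (deriv f) x - ω * deriv f x := by
    intro x
    exact ((hf1 x).hasDerivAt.sub (((hf x).hasDerivAt).const_mul ω)).deriv
  have hww : ∀ t ∈ Icc (0:ℝ) S, deriv w t = (-ω) * w t := by
    intro t ht
    rw [hwderiv, hode t ht, hw]; ring
  have hwz : ∀ t ∈ Icc (0:ℝ) S, w t = 0 := by
    intro t ht
    have := lin1 (-ω) S w hwdiff hww t ht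
    simp [hw, hz0, hz1] at this
    simpa [hw] using this
  have hfd : ∀ t ∈ Icc (0:ℝ) S, deriv f t = ω * f t := by
    intro t ht
    have := hwz t ht
    simp only [hw] at this
    linarith
  intro t ht
  have hfz := lin1 ω S f hf hfd t ht
  rw [hz0] at hfz
  simp at hfz
  exact ⟨hfz, by rw [hfd t ht, hfz]; ring⟩

/-- Representation of solutions of f'' = -ω² f on an interval. -/
lemma osc2 (ω S p q : ℝ) (hω : ω ≠ 0) (f : ℝ → ℝ) (hf : Differentiable ℝ f)
    (hf1 : Differentiable ℝ (deriv f))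
    (hode : ∀ t ∈ Icc (0:ℝ) S, deriv (deriv f) t = -(ω^2) * f t)
    (hp : f 0 = p) (hq : deriv f 0 = q) :
    ∀ t ∈ Icc (0:ℝ) S, f t = p * Real.cos (ω*t) + (q/ω) * Real.sin (ω*t) ∧
      deriv f t = -(p*ω) * Real.sin (ω*t) + q * Real.cos (ω*t) := by
  set g : ℝ → ℝ := fun t => p * Real.cos (ω*t) + (q/ω) * Real.sin (ω*t) with hg
  set G : ℝ → ℝ := fun t => -(p*ω) * Real.sin (ω*t) + q * Real.cos (ω*t) with hG
  have hg' : ∀ x, HasDerivAt g (G x) x := by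
    intro x
    have := ((hasDerivAt_cos_mul ω x).const_mul p).add ((hasDerivAt_sin_mul ω x).const_mul (q/ω))
    refine this.congr_deriv ?_
    field_simp [hG]; ring
  have hG' : ∀ x, HasDerivAt G (-(ω^2) * g x) x := by
    intro x
    have := ((hasDerivAt_sin_mul ω x).const_mul (-(p*ω))).add ((hasDerivAt_cos_mul ω x).const_mul q)
    refine this.congr_deriv ?_
    rw [hg]; field_simp; ring
  set d : ℝ → ℝ := fun t => f t - g t with hd
  have hgdiff : Differentiable ℝ g := fun x => (hg' x).differentiableAt
  have hddiff : Differentiable ℝ d := hf.sub hgdiff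
  have hdderiv : ∀ x, deriv d x = deriv f x - G x := by
    intro x
    exact ((hf x).hasDerivAt.sub (hg' x)).deriv
  have hdderiv' : deriv d = fun x => deriv f x - G x := funext hdderiv
  have hd1 : Differentiable ℝ (deriv d) := by
    rw [hdderiv']
    exact hf1.sub fun x => (hG' x).differentiableAt
  have hdode : ∀ t ∈ Icc (0:ℝ) S, deriv (deriv d) t = -(ω^2) * d t := by
    intro t ht
    rw [hdderiv']
    have : deriv (fun x => deriv f x - G x) t = deriv (deriv f) t - (-(ω^2) * g t) :=
      ((hf1 t).hasDerivAt.sub (hG' t)).deriv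
    rw [this, hode t ht, hd]; ring
  have hz0 : d 0 = 0 := by simp [hd, hg, hp]
  have hz1 : deriv d 0 = 0 := by
    rw [hdderiv 0]; simp [hG, hq]
  intro t ht
  obtain ⟨e0, e1⟩ := osc0 ω S d hddiff hd1 hdode hz0 hz1 hω t ht
  constructor
  · have : f t - g t = 0 := e0
    simp [hg] at this ⊢; linarith
  · have := hdderiv t
    rw [e1] at this
    simp [hG] at this ⊢; linarith

/-- Representation of solutions of f'' = ω² f on an interval. -/
lemma exp2 (ω S p q : ℝ) (hω : ω ≠ 0) (f : ℝ → ℝ) (hf : Differentiable ℝ f)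
    (hf1 : Differentiable ℝ (deriv f))
    (hode : ∀ t ∈ Icc (0:ℝ) S, deriv (deriv f) t = ω^2 * f t)
    (hp : f 0 = p) (hq : deriv f 0 = q) :
    ∀ t ∈ Icc (0:ℝ) S,
      f t = (ω*p+q)/(2*ω) * Real.exp (ω*t) + (ω*p-q)/(2*ω) * Real.exp (-(ω*t)) ∧
      deriv f t = ω*((ω*p+q)/(2*ω)) * Real.exp (ω*t) - ω*((ω*p-q)/(2*ω)) * Real.exp (-(ω*t)) := by
  set A : ℝ := (ω*p+q)/(2*ω) with hA
  set B : ℝ := (ω*p-q)/(2*ω) with hB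
  set g : ℝ → ℝ := fun t => A * Real.exp (ω*t) + B * Real.exp (-(ω*t)) with hg
  set G : ℝ → ℝ := fun t => ω*A * Real.exp (ω*t) - ω*B * Real.exp (-(ω*t)) with hG
  have hexpneg : ∀ x : ℝ, Real.exp (-(ω*x)) = Real.exp ((-ω)*x) := by
    intro x; ring_nf
  have hg' : ∀ x, HasDerivAt g (G x) x := by
    intro x
    have h1 : HasDerivAt (fun t => Real.exp (-(ω*t))) ((-ω) * Real.exp (-(ω*x))) x := by
      have := hasDerivAt_exp_mul (-ω) x
      simp only [neg_mul] at this ⊢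
      exact this
    have := ((hasDerivAt_exp_mul ω x).const_mul A).add (h1.const_mul B)
    refine this.congr_deriv ?_
    simp [hG]; ring
  have hG' : ∀ x, HasDerivAt G (ω^2 * g x) x := by
    intro x
    have h1 : HasDerivAt (fun t => Real.exp (-(ω*t))) ((-ω) * Real.exp (-(ω*x))) x := by
      have := hasDerivAt_exp_mul (-ω) x
      simp only [neg_mul] at this ⊢
      exact this
    have := ((hasDerivAt_exp_mul ω x).const_mul (ω*A)).sub (h1.const_mul (ω*B))
    refine this.congr_deriv ?_
    simp [hg]; ring
  set d : ℝ → ℝ := fun t => f t - g t with hd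
  have hgdiff : Differentiable ℝ g := fun x => (hg' x).differentiableAt
  have hddiff : Differentiable ℝ d := hf.sub hgdiff
  have hdderiv : ∀ x, deriv d x = deriv f x - G x := by
    intro x
    exact ((hf x).hasDerivAt.sub (hg' x)).deriv
  have hdderiv' : deriv d = fun x => deriv f x - G x := funext hdderiv
  have hd1 : Differentiable ℝ (deriv d) := by
    rw [hdderiv']
    exact hf1.sub fun x => (hG' x).differentiableAt
  have hdode : ∀ t ∈ Icc (0:ℝ) S, deriv (deriv d) t = ω^2 * d t := by
    intro t ht
    rw [hdderiv']
    have : deriv (fun x => deriv f x - G x) t = deriv (deriv f) t - ω^2 * g t :=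
      ((hf1 t).hasDerivAt.sub (hG' t)).deriv
    rw [this, hode t ht, hd]; ring
  have hABp : A + B = p := by rw [hA, hB]; field_simp; ring
  have hABq : ω*A - ω*B = q := by rw [hA, hB]; field_simp; ring
  have hz0 : d 0 = 0 := by
    simp [hd, hg, hp]; linarith [hABp]
  have hz1 : deriv d 0 = 0 := by
    rw [hdderiv 0]; simp [hG, hq]; linarith [hABq]
  intro t ht
  obtain ⟨e0, e1⟩ := expz ω S d hddiff hd1 hdode hz0 hz1 t ht
  constructor
  · have : f t - g t = 0 := e0
    simp [hg] at this ⊢; linarith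
  · have := hdderiv t
    rw [e1] at this
    simp [hG] at this ⊢; linarith


lemma detM (c e f : ℝ) (hef : e * f = 1) :
    (!![(1:ℝ), 1, 1, 0; c, -c, 0, c; c*e, -(c*f), -c, 0; c^2*e, c^2*f, 0, -(c^2)]).det
      = 2*c^4*(f - e) := by
  simp [Matrix.det_succ_row_zero, Fin.sum_univ_succ, Fin.succAbove]
  linear_combination (2*c^4) * hef

/-- The boundary-condition matrix `𝒜` of Section 5.1, with `ω = π/(2T)`. -/
noncomputable def boundaryMatrix (T : ℝ) : Matrix (Fin 4) (Fin 4) ℝ :=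
  !![(1:ℝ), 1, 1, 0;
    π/(2*T), -(π/(2*T)), 0, π/(2*T);
    (π/(2*T)) * Real.exp (π/2), -((π/(2*T)) * Real.exp (-(π/2))), -(π/(2*T)), 0;
    (π/(2*T))^2 * Real.exp (π/2), (π/(2*T))^2 * Real.exp (-(π/2)), 0, -((π/(2*T))^2)]

set_option maxHeartbeats 1000000

/-- For `T > 0`, `ω = π/(2T)` and prescribed `a, b`, the solution of `h'''' = ω⁴ h` on
`[0,T]` with `h(0) = 0`, `h'(0) = 0`, `h'(T) = a`, `h''(T) = b` has coefficients
`(A,B,C,D)ᵀ = 𝒜⁻¹ (0,0,a,b)ᵀ` in the representation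
`h(t) = A e^{ωt} + B e^{-ωt} + C cos(ωt) + D sin(ωt)`. -/
theorem fourth_order_bvp_coefficients (T a b : ℝ) (hT : 0 < T) (h : ℝ → ℝ)
    (hsm : ContDiff ℝ 4 h)
    (hode : ∀ t ∈ Icc (0:ℝ) T, iteratedDeriv 4 h t = (π/(2*T))^4 * h t)
    (h0 : h 0 = 0) (h0' : deriv h 0 = 0)
    (hTa : deriv h T = a) (hTb : iteratedDeriv 2 h T = b) :
    ∀ t ∈ Icc (0:ℝ) T,
      h t = (boundaryMatrix T)⁻¹.mulVec ![0, 0, a, b] 0 * Real.exp (π/(2*T) * t)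
        + (boundaryMatrix T)⁻¹.mulVec ![0, 0, a, b] 1 * Real.exp (-(π/(2*T) * t))
        + (boundaryMatrix T)⁻¹.mulVec ![0, 0, a, b] 2 * Real.cos (π/(2*T) * t)
        + (boundaryMatrix T)⁻¹.mulVec ![0, 0, a, b] 3 * Real.sin (π/(2*T) * t) := by
  set ω : ℝ := π/(2*T) with hωdef
  have hω : 0 < ω := by
    rw [hωdef]; positivity
  have hωne : ω ≠ 0 := ne_of_gt hω
  -- differentiability
  have hd0 : Differentiable ℝ h := hsm.differentiable (by norm_num)
  have hd1 : Differentiable ℝ (deriv h) := by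
    have := hsm.differentiable_iteratedDeriv 1 (by norm_num)
    simpa [iteratedDeriv_succ, iteratedDeriv_zero] using this
  have hd2 : Differentiable ℝ (deriv (deriv h)) := by
    have := hsm.differentiable_iteratedDeriv 2 (by norm_num)
    simpa [iteratedDeriv_succ, iteratedDeriv_zero] using this
  have hd3 : Differentiable ℝ (deriv (deriv (deriv h))) := by
    have := hsm.differentiable_iteratedDeriv 3 (by norm_num)
    simpa [iteratedDeriv_succ, iteratedDeriv_zero] using this
  have hode4 : ∀ t ∈ Icc (0:ℝ) T, deriv (deriv (deriv (deriv h))) t = ω^4 * h t := by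
    intro t ht
    have := hode t ht
    rw [hωdef]
    simpa [iteratedDeriv_succ, iteratedDeriv_zero] using this
  set p : ℝ := deriv (deriv h) 0 with hpdef
  set q : ℝ := deriv (deriv (deriv h)) 0 with hqdef
  set u : ℝ → ℝ := fun t => deriv (deriv h) t - ω^2 * h t with hu
  set v : ℝ → ℝ := fun t => deriv (deriv h) t + ω^2 * h t with hv
  have hudiff : Differentiable ℝ u := hd2.sub (hd0.const_mul _)
  have hvdiff : Differentiable ℝ v := hd2.add (hd0.const_mul _)
  have hu' : ∀ x, deriv u x = deriv (deriv (deriv h)) x - ω^2 * deriv h x := by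
    intro x
    exact ((hd2 x).hasDerivAt.sub (((hd0 x).hasDerivAt).const_mul (ω^2))).deriv
  have hv' : ∀ x, deriv v x = deriv (deriv (deriv h)) x + ω^2 * deriv h x := by
    intro x
    exact ((hd2 x).hasDerivAt.add (((hd0 x).hasDerivAt).const_mul (ω^2))).deriv
  have hu'fun : deriv u = fun x => deriv (deriv (deriv h)) x - ω^2 * deriv h x := funext hu'
  have hv'fun : deriv v = fun x => deriv (deriv (deriv h)) x + ω^2 * deriv h x := funext hv'
  have hud1 : Differentiable ℝ (deriv u) := by rw [hu'fun]; exact hd3.sub (hd1.const_mul _)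
  have hvd1 : Differentiable ℝ (deriv v) := by rw [hv'fun]; exact hd3.add (hd1.const_mul _)
  have huode : ∀ t ∈ Icc (0:ℝ) T, deriv (deriv u) t = -(ω^2) * u t := by
    intro t ht
    rw [hu'fun]
    have : deriv (fun x => deriv (deriv (deriv h)) x - ω^2 * deriv h x) t
        = deriv (deriv (deriv (deriv h))) t - ω^2 * deriv (deriv h) t :=
      ((hd3 t).hasDerivAt.sub (((hd1 t).hasDerivAt).const_mul (ω^2))).deriv
    rw [this, hode4 t ht, hu]; ring
  have hvode : ∀ t ∈ Icc (0:ℝ) T, deriv (deriv v) t = ω^2 * v t := by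
    intro t ht
    rw [hv'fun]
    have : deriv (fun x => deriv (deriv (deriv h)) x + ω^2 * deriv h x) t
        = deriv (deriv (deriv (deriv h))) t + ω^2 * deriv (deriv h) t :=
      ((hd3 t).hasDerivAt.add (((hd1 t).hasDerivAt).const_mul (ω^2))).deriv
    rw [this, hode4 t ht, hv]; ring
  have hu0 : u 0 = p := by simp [hu, h0, hpdef]
  have hu1 : deriv u 0 = q := by rw [hu' 0, h0']; simp [hqdef]
  have hv0 : v 0 = p := by simp [hv, h0, hpdef]
  have hv1 : deriv v 0 = q := by rw [hv' 0, h0']; simp [hqdef]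
  have hurep := osc2 ω T p q hωne u hudiff hud1 huode hu0 hu1
  have hvrep := exp2 ω T p q hωne v hvdiff hvd1 hvode hv0 hv1
  set Av : ℝ := (ω*p+q)/(2*ω) with hAv
  set Bv : ℝ := (ω*p-q)/(2*ω) with hBv
  have hTmem : T ∈ Icc (0:ℝ) T := ⟨le_of_lt hT, le_refl T⟩
  have hωT : ω * T = π/2 := by rw [hωdef]; field_simp
  -- boundary values
  have ha : a = (ω*Av*Real.exp (π/2) - ω*Bv*Real.exp (-(π/2)) + p*ω)/(2*ω^2) := by
    have hdh : deriv v T - deriv u T = 2*ω^2 * deriv h T := by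
      rw [hu' T, hv' T]; ring
    obtain ⟨_, hu'T⟩ := hurep T hTmem
    obtain ⟨_, hv'T⟩ := hvrep T hTmem
    rw [hu'T, hv'T, hTa, hωT] at hdh
    simp [Real.sin_pi_div_two, Real.cos_pi_div_two] at hdh
    rw [eq_div_iff (by positivity : (2*ω^2:ℝ) ≠ 0)]
    linarith [hdh]
  have hb : b = (Av*Real.exp (π/2) + Bv*Real.exp (-(π/2)) + q/ω)/2 := by
    have hdh : v T + u T = 2 * deriv (deriv h) T := by rw [hu, hv]; ring
    have h2T : iteratedDeriv 2 h T = deriv (deriv h) T := by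
      simp [iteratedDeriv_succ, iteratedDeriv_zero]
    obtain ⟨huT, _⟩ := hurep T hTmem
    obtain ⟨hvT, _⟩ := hvrep T hTmem
    rw [huT, hvT, hωT] at hdh
    rw [h2T] at hTb
    rw [hTb] at hdh
    simp [Real.sin_pi_div_two, Real.cos_pi_div_two] at hdh
    rw [eq_div_iff (by norm_num : (2:ℝ) ≠ 0)]
    linarith [hdh]
  -- the coefficient vector
  set x : Fin 4 → ℝ := ![Av/(2*ω^2), Bv/(2*ω^2), -(p/(2*ω^2)), -(q/(2*ω^3))] with hx
  have hmul : (boundaryMatrix T).mulVec x = ![0, 0, a, b] := by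
    funext i
    fin_cases i <;>
      simp [boundaryMatrix, Matrix.mulVec, dotProduct, Fin.sum_univ_four, hx,
        ← hωdef, ha, hb, hAv, hBv] <;>
      field_simp <;> ring
  have hbm : boundaryMatrix T = !![(1:ℝ), 1, 1, 0; ω, -ω, 0, ω;
      ω * Real.exp (π/2), -(ω * Real.exp (-(π/2))), -ω, 0;
      ω^2 * Real.exp (π/2), ω^2 * Real.exp (-(π/2)), 0, -(ω^2)] := rfl
  have hef : Real.exp (π/2) * Real.exp (-(π/2)) = 1 := by
    rw [← Real.exp_add]; simp
  have hdetval : (boundaryMatrix T).det = 2*ω^4*(Real.exp (-(π/2)) - Real.exp (π/2)) := by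
    rw [hbm, detM ω (Real.exp (π/2)) (Real.exp (-(π/2))) hef]
  have hdet : (boundaryMatrix T).det ≠ 0 := by
    rw [hdetval]
    have hlt : Real.exp (-(π/2)) < Real.exp (π/2) := by
      apply Real.exp_lt_exp.mpr
      have := Real.pi_pos
      linarith
    exact ne_of_lt (mul_neg_of_pos_of_neg (by positivity) (by linarith))
  have hinv : x = (boundaryMatrix T)⁻¹.mulVec ![0, 0, a, b] := by
    have h1 := Matrix.nonsing_inv_mul (boundaryMatrix T) (isUnit_iff_ne_zero.mpr hdet)
    calc x = (1 : Matrix (Fin 4) (Fin 4) ℝ).mulVec x := (Matrix.one_mulVec x).symm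
      _ = ((boundaryMatrix T)⁻¹ * boundaryMatrix T).mulVec x := by rw [h1]
      _ = (boundaryMatrix T)⁻¹.mulVec ((boundaryMatrix T).mulVec x) :=
          (Matrix.mulVec_mulVec _ _ _).symm
      _ = (boundaryMatrix T)⁻¹.mulVec ![0, 0, a, b] := by rw [hmul]
  intro t ht
  rw [← hinv]
  have hht : 2*ω^2 * h t = v t - u t := by rw [hu, hv]; ring
  obtain ⟨huT, _⟩ := hurep t ht
  obtain ⟨hvT, _⟩ := hvrep t ht
  rw [huT, hvT] at hht
  have hxval : x 0 = Av/(2*ω^2) ∧ x 1 = Bv/(2*ω^2) ∧ x 2 = -(p/(2*ω^2)) ∧ x 3 = -(q/(2*ω^3)) := by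
    refine ⟨rfl, rfl, rfl, rfl⟩
  obtain ⟨e0, e1, e2, e3⟩ := hxval
  rw [e0, e1, e2, e3]
  have h2ω : (2*ω^2 : ℝ) ≠ 0 := by positivity
  have key : 2*ω^2 * (Av/(2*ω^2) * Real.exp (ω*t) + Bv/(2*ω^2) * Real.exp (-(ω*t))
      + (-(p/(2*ω^2))) * Real.cos (ω*t) + (-(q/(2*ω^3))) * Real.sin (ω*t)) = 2*ω^2 * h t := by
    rw [hht]
    field_simp
    ring
  exact (mul_left_cancel₀ h2ω key).symm
end
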